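/- arXiv:2109.10933 — 4 statements merged into one kernel-verified Lean document; each statement's English description precedes it below -/
import Mathlib

section
/- (Inner product/orthogonality test implies norm test) Let υ be a square-integrable random vector in ℝ^d with E[υ] = g for a nonzero g ∈ ℝ^d, and set ê := g/‖g‖. Suppose the inner product test Var(⟨υ, ê⟩) ≤ θ²‖g‖² and the orthogonality test E[‖υ − ⟨υ, ê⟩·ê‖²] ≤ ν²‖g‖² hold for some θ, ν ≥ 0. Then for every ε with ε² ≥ θ² + ν², the norm test E[‖υ − g‖²] ≤ ε²‖g‖² is satisfied. -/
open MeasureTheory ProbabilityTheory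
open scoped RealInnerProductSpace

/-- **Inner product/orthogonality test implies norm test.** If `υ` is a
square-integrable random vector in `ℝ^d` with `E[υ] = g ≠ 0`, `ê := g / ‖g‖`, and the
inner product test `Var(⟨υ, ê⟩) ≤ θ²‖g‖²` and orthogonality test
`E[‖υ − ⟨υ, ê⟩ • ê‖²] ≤ ν²‖g‖²` hold for some `θ, ν ≥ 0`, then for every `ε` with
`ε² ≥ θ² + ν²`, the norm test `E[‖υ − g‖²] ≤ ε²‖g‖²` is satisfied. -/
theorem inner_orth_test_implies_norm_test {d : ℕ} {Ω : Type*} [MeasurableSpace Ω]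
    (μ : Measure Ω) [IsProbabilityMeasure μ]
    (υ : Ω → EuclideanSpace ℝ (Fin d)) (g : EuclideanSpace ℝ (Fin d)) (hg : g ≠ 0)
    (hsq : MemLp υ 2 μ)
    (hmean : ∫ ω, υ ω ∂μ = g)
    (ehat : EuclideanSpace ℝ (Fin d)) (hehat : ehat = ‖g‖⁻¹ • g)
    (θ ν : ℝ) (hθ : 0 ≤ θ) (hν : 0 ≤ ν)
    (hinner : variance (fun ω => ⟪υ ω, ehat⟫) μ ≤ θ ^ 2 * ‖g‖ ^ 2)
    (horth : ∫ ω, ‖υ ω - ⟪υ ω, ehat⟫ • ehat‖ ^ 2 ∂μ ≤ ν ^ 2 * ‖g‖ ^ 2) :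
    ∀ ε : ℝ, θ ^ 2 + ν ^ 2 ≤ ε ^ 2 →
      ∫ ω, ‖υ ω - g‖ ^ 2 ∂μ ≤ ε ^ 2 * ‖g‖ ^ 2 := by
  intro ε hε
  have hgpos : (0:ℝ) < ‖g‖ := norm_pos_iff.mpr hg
  have hee : ⟪ehat, ehat⟫ = 1 := by
    rw [hehat, real_inner_smul_left, real_inner_smul_right, real_inner_self_eq_norm_sq]
    field_simp
  have heg : ⟪ehat, g⟫ = ‖g‖ := by
    rw [hehat, real_inner_smul_left, real_inner_self_eq_norm_sq]
    field_simp
  -- X := ⟪υ ω, ehat⟫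
  set X : Ω → ℝ := fun ω => ⟪υ ω, ehat⟫ with hX
  have hXmem : MemLp X 2 μ := hsq.inner_const ehat
  have hXint : Integrable X μ := hXmem.integrable (by norm_num)
  have hXmean : ∫ ω, X ω ∂μ = ‖g‖ := by
    have : ∫ ω, X ω ∂μ = ∫ ω, ⟪ehat, υ ω⟫ ∂μ := by
      simp only [hX, real_inner_comm]
    rw [this, integral_inner (hsq.integrable (by norm_num)), hmean, heg]
  -- pointwise decomposition
  have hptw : ∀ ω, ‖υ ω - g‖ ^ 2 = (X ω - ‖g‖) ^ 2 + ‖υ ω - X ω • ehat‖ ^ 2 := by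
    intro ω
    have h1 : ‖υ ω - g‖ ^ 2 = ‖υ ω‖^2 - 2 * ⟪υ ω, g⟫ + ‖g‖^2 := by
      rw [norm_sub_sq_real]
    have h2 : ‖υ ω - X ω • ehat‖ ^ 2
        = ‖υ ω‖^2 - 2 * (X ω * X ω) + X ω ^2 := by
      rw [norm_sub_sq_real, real_inner_smul_right, norm_smul, mul_pow]
      have : ‖ehat‖ ^ 2 = 1 := by
        rw [← real_inner_self_eq_norm_sq, hee]
      rw [this]
      simp [hX, abs_sq]
    have h3 : ⟪υ ω, g⟫ = ‖g‖ * X ω := by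
      have hXw : X ω = ‖g‖⁻¹ * ⟪υ ω, g⟫ := by
        rw [hX]; dsimp only; rw [hehat, real_inner_smul_right]
      rw [hXw]
      field_simp
    rw [h1, h2, h3]; ring
  have hintX2 : Integrable (fun ω => (X ω - ‖g‖)^2) μ :=
    (hXmem.sub (memLp_const _)).integrable_sq
  have hintO : Integrable (fun ω => ‖υ ω - X ω • ehat‖^2) μ := by
    have hmem : MemLp (fun ω => υ ω - X ω • ehat) 2 μ :=
      hsq.sub (MemLp.smul (p := 2) (q := ⊤) (r := 2) (memLp_top_const ehat) hXmem)
    exact hmem.norm.integrable_sq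
  have hvar : variance X μ = ∫ ω, (X ω - ‖g‖)^2 ∂μ := by
    rw [variance_eq_integral hXmem.aestronglyMeasurable.aemeasurable, hXmean]
  calc ∫ ω, ‖υ ω - g‖ ^ 2 ∂μ
      = ∫ ω, ((X ω - ‖g‖)^2 + ‖υ ω - X ω • ehat‖^2) ∂μ := by
        exact integral_congr_ae (ae_of_all _ hptw)
    _ = (∫ ω, (X ω - ‖g‖)^2 ∂μ) + ∫ ω, ‖υ ω - X ω • ehat‖^2 ∂μ :=
        integral_add hintX2 hintO
    _ ≤ θ ^ 2 * ‖g‖ ^ 2 + ν ^ 2 * ‖g‖ ^ 2 := by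
        rw [← hvar]; exact add_le_add hinner horth
    _ ≤ ε ^ 2 * ‖g‖ ^ 2 := by nlinarith [sq_nonneg ‖g‖]
end

section
/- A square-integrable random vector υ in ℝ^d with E[υ] = g ≠ 0 and covariance matrix Σ satisfies E[‖υ − g‖²] = trace(Σ); consequently, if θ² := ε²·⟨ê, Σ ê⟩/trace(Σ) and ν² := ε²·(trace(Σ) − ⟨ê, Σ ê⟩)/trace(Σ) (assuming trace(Σ) > 0), where ê := g/‖g‖, then θ² + ν² = ε², and the norm test E[‖υ − g‖²] ≤ ε²‖g‖² holds if and only if both the inner product test Var(⟨υ, ê⟩) ≤ θ²‖g‖² and the orthogonality test E[‖υ − ⟨υ, ê⟩·ê‖²] ≤ ν²‖g‖² hold. -/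
open MeasureTheory ProbabilityTheory
open scoped RealInnerProductSpace

lemma mul_integrable_of_memL2 {Ω : Type*} [MeasurableSpace Ω] {μ : Measure Ω} {f g : Ω → ℝ}
    (hf : MemLp f 2 μ) (hg : MemLp g 2 μ) : Integrable (fun ω => f ω * g ω) μ := by
  have h1 : Integrable (fun ω => (f ω + g ω) ^ 2) μ := by
    have := (hf.add hg).integrable_sq
    simpa using this
  have h2 := hf.integrable_sq
  have h3 := hg.integrable_sq
  have heq : (fun ω => f ω * g ω) = fun ω => (((f ω + g ω) ^ 2 - f ω ^ 2) - g ω ^ 2) / 2 := by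
    funext ω; ring
  rw [heq]
  exact ((h1.sub h2).sub h3).div_const 2

/-- A square-integrable random vector `υ` in `ℝ^d` with `E[υ] = g ≠ 0`
and covariance matrix `Cov` satisfies `E[‖υ − g‖²] = trace(Cov)`; consequently, if
`θ² := ε²·⟨ê, Cov ê⟩/trace(Cov)` and `ν² := ε²·(trace(Cov) − ⟨ê, Cov ê⟩)/trace(Cov)`
(assuming `trace(Cov) > 0`), where `ê := g/‖g‖`, then `θ² + ν² = ε²`, and the norm test
`E[‖υ − g‖²] ≤ ε²‖g‖²` holds iff both the inner product test `Var(⟨υ, ê⟩) ≤ θ²‖g‖²` and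
the orthogonality test `E[‖υ − ⟨υ, ê⟩ • ê‖²] ≤ ν²‖g‖²` hold. -/
theorem trace_and_norm_test_iff_component_tests {d : ℕ} {Ω : Type*}
    [MeasurableSpace Ω] (μ : Measure Ω) [IsProbabilityMeasure μ]
    (υ : Ω → EuclideanSpace ℝ (Fin d)) (g : EuclideanSpace ℝ (Fin d)) (hg : g ≠ 0)
    (hsq : MemLp υ 2 μ)
    (hmean : ∫ ω, υ ω ∂μ = g)
    (Cov : Matrix (Fin d) (Fin d) ℝ)
    (hCov : ∀ i j, Cov i j = ∫ ω, (υ ω i - g i) * (υ ω j - g j) ∂μ)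
    (ehat : EuclideanSpace ℝ (Fin d)) (hehat : ehat = ‖g‖⁻¹ • g)
    (htrace : 0 < Cov.trace)
    (ε : ℝ)
    (q θsq νsq : ℝ)
    (hq : q = ∑ i, ∑ j, ehat i * Cov i j * ehat j)
    (hθsq : θsq = ε ^ 2 * q / Cov.trace)
    (hνsq : νsq = ε ^ 2 * (Cov.trace - q) / Cov.trace) :
    (∫ ω, ‖υ ω - g‖ ^ 2 ∂μ = Cov.trace) ∧
    θsq + νsq = ε ^ 2 ∧
    ((∫ ω, ‖υ ω - g‖ ^ 2 ∂μ ≤ ε ^ 2 * ‖g‖ ^ 2) ↔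
      (variance (fun ω => ⟪υ ω, ehat⟫) μ ≤ θsq * ‖g‖ ^ 2 ∧
       ∫ ω, ‖υ ω - ⟪υ ω, ehat⟫ • ehat‖ ^ 2 ∂μ ≤ νsq * ‖g‖ ^ 2)) := by
  have hg0 : ‖g‖ ≠ 0 := norm_ne_zero_iff.mpr hg
  set a : Ω → EuclideanSpace ℝ (Fin d) := fun ω => υ ω - g with ha
  have hA : MemLp a 2 μ := hsq.sub (memLp_const g)
  have hai : ∀ ω i, a ω i = υ ω i - g i := fun ω i => rfl
  have hAi : ∀ i, MemLp (fun ω => a ω i) 2 μ := fun i => by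
    have := (EuclideanSpace.proj (𝕜 := ℝ) i).comp_memLp' hA
    exact this
  have hmul : ∀ i j, Integrable (fun ω => a ω i * a ω j) μ := fun i j =>
    mul_integrable_of_memL2 (hAi i) (hAi j)
  -- ehat facts
  have hge : ⟪g, ehat⟫ = ‖g‖ := by
    rw [hehat, real_inner_smul_right, real_inner_self_eq_norm_sq]
    field_simp
  have hehat1 : ‖ehat‖ = 1 := by
    rw [hehat, norm_smul]
    simp [abs_of_nonneg (inv_nonneg.mpr (norm_nonneg g)), inv_mul_cancel₀ hg0]
  -- trace identity
  have hT : ∫ ω, ‖υ ω - g‖ ^ 2 ∂μ = Cov.trace := by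
    have h1 : ∀ ω, ‖υ ω - g‖ ^ 2 = ∑ i, a ω i * a ω i := by
      intro ω
      rw [show υ ω - g = a ω from rfl, EuclideanSpace.norm_eq,
        Real.sq_sqrt (by positivity)]
      simp [sq_abs, sq]
    calc ∫ ω, ‖υ ω - g‖ ^ 2 ∂μ = ∫ ω, ∑ i, a ω i * a ω i ∂μ := by
          simp_rw [h1]
      _ = ∑ i, ∫ ω, a ω i * a ω i ∂μ := integral_finset_sum _ fun i _ => hmul i i
      _ = Cov.trace := by
          rw [Matrix.trace]
          refine Finset.sum_congr rfl fun i _ => ?_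
          rw [Matrix.diag, hCov i i]
          rfl
  -- inner product function
  set f : Ω → ℝ := fun ω => ⟪υ ω, ehat⟫ with hf
  have hfL2 : MemLp f 2 μ := by
    refine ((innerSL ℝ ehat).comp_memLp' hsq).ae_eq ?_
    filter_upwards with ω
    simp only [Function.comp_apply, innerSL_apply_apply, hf]
    exact real_inner_comm _ _
  have hfmean : ∫ ω, f ω ∂μ = ‖g‖ := by
    have : (∫ ω, ⟪ehat, υ ω⟫ ∂μ) = ⟪ehat, ∫ ω, υ ω ∂μ⟫ :=
      integral_inner (hsq.integrable one_le_two) ehat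
    rw [hmean] at this
    calc ∫ ω, f ω ∂μ = ∫ ω, ⟪ehat, υ ω⟫ ∂μ := by simp_rw [hf, real_inner_comm]
      _ = ⟪ehat, g⟫ := this
      _ = ‖g‖ := by rw [real_inner_comm]; exact hge
  have hfa : ∀ ω, f ω - ‖g‖ = ⟪a ω, ehat⟫ := by
    intro ω
    show ⟪υ ω, ehat⟫ - ‖g‖ = ⟪υ ω - g, ehat⟫
    rw [inner_sub_left, hge]
  have hfaL2 : MemLp (fun ω => ⟪a ω, ehat⟫) 2 μ := by
    refine (hfL2.sub (memLp_const ‖g‖)).ae_eq ?_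
    filter_upwards with ω
    exact hfa ω
  -- inner product as sum
  have hinner_sum : ∀ ω, ⟪a ω, ehat⟫ = ∑ i, a ω i * ehat i := by
    intro ω; simp [PiLp.inner_apply, RCLike.inner_apply, mul_comm]
  have hq_int : ∫ ω, ⟪a ω, ehat⟫ ^ 2 ∂μ = q := by
    have hsq' : ∀ ω, ⟪a ω, ehat⟫ ^ 2 = ∑ i, ∑ j, ehat i * ehat j * (a ω i * a ω j) := by
      intro ω
      rw [hinner_sum, sq, Finset.sum_mul_sum]
      exact Finset.sum_congr rfl fun i _ => Finset.sum_congr rfl fun j _ => by ring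
    have hterm : ∀ i j, Cov i j = ∫ ω, a ω i * a ω j ∂μ := fun i j => hCov i j
    calc ∫ ω, ⟪a ω, ehat⟫ ^ 2 ∂μ
        = ∫ ω, ∑ i, ∑ j, ehat i * ehat j * (a ω i * a ω j) ∂μ := by simp_rw [hsq']
      _ = ∑ i, ∑ j, ∫ ω, ehat i * ehat j * (a ω i * a ω j) ∂μ := by
          rw [integral_finset_sum _ fun i _ =>
            integrable_finset_sum _ fun j _ => (hmul i j).const_mul _]
          exact Finset.sum_congr rfl fun i _ =>
            integral_finset_sum _ fun j _ => (hmul i j).const_mul _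
      _ = q := by
          rw [hq]
          refine Finset.sum_congr rfl fun i _ => Finset.sum_congr rfl fun j _ => ?_
          rw [integral_const_mul, ← hterm i j]
          ring
  have hvar : variance f μ = ∫ ω, ⟪a ω, ehat⟫ ^ 2 ∂μ := by
    rw [variance_eq_integral hfL2.aemeasurable]
    refine integral_congr_ae (Filter.Eventually.of_forall fun ω => ?_)
    simp only [Pi.pow_apply, Pi.sub_apply]
    rw [hfmean, hfa]
  have horth_pt : ∀ ω, ‖υ ω - ⟪υ ω, ehat⟫ • ehat‖ ^ 2 = ‖a ω‖ ^ 2 - ⟪a ω, ehat⟫ ^ 2 := by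
    intro ω
    have h2 : ⟪υ ω, ehat⟫ = ⟪a ω, ehat⟫ + ‖g‖ := by
      have := hfa ω; simp only [hf] at this; linarith
    have h3 : ‖g‖ • ehat = g := by
      rw [hehat, smul_smul, mul_inv_cancel₀ hg0, one_smul]
    have h1 : υ ω - ⟪υ ω, ehat⟫ • ehat = a ω - ⟪a ω, ehat⟫ • ehat := by
      rw [h2, add_smul, h3]
      show υ ω - (⟪a ω, ehat⟫ • ehat + g) = (υ ω - g) - ⟪a ω, ehat⟫ • ehat
      abel
    rw [h1, norm_sub_sq_real, real_inner_smul_right, norm_smul, hehat1, mul_one,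
      Real.norm_eq_abs, sq_abs]
    ring
  have hnormsq_int : Integrable (fun ω => ‖a ω‖ ^ 2) μ := by
    have he : (fun ω => ‖a ω‖ ^ 2) = fun ω => ∑ i, a ω i * a ω i := by
      funext ω
      rw [EuclideanSpace.norm_eq, Real.sq_sqrt (by positivity)]
      simp [sq_abs, sq]
    rw [he]; exact integrable_finset_sum _ fun i _ => hmul i i
  have hT' : ∫ ω, ‖a ω‖ ^ 2 ∂μ = Cov.trace := hT
  have horth : ∫ ω, ‖υ ω - ⟪υ ω, ehat⟫ • ehat‖ ^ 2 ∂μ = Cov.trace - q := by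
    calc ∫ ω, ‖υ ω - ⟪υ ω, ehat⟫ • ehat‖ ^ 2 ∂μ
        = ∫ ω, (‖a ω‖ ^ 2 - ⟪a ω, ehat⟫ ^ 2) ∂μ := by simp_rw [horth_pt]
      _ = (∫ ω, ‖a ω‖ ^ 2 ∂μ) - ∫ ω, ⟪a ω, ehat⟫ ^ 2 ∂μ :=
          integral_sub hnormsq_int hfaL2.integrable_sq
      _ = Cov.trace - q := by rw [hT', hq_int]
  have hsum : θsq + νsq = ε ^ 2 := by
    rw [hθsq, hνsq]
    field_simp
    ring
  have hqnn : 0 ≤ q := by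
    rw [← hq_int]; exact integral_nonneg fun ω => sq_nonneg _
  have hTq : 0 ≤ Cov.trace - q := by
    rw [← horth]; exact integral_nonneg fun ω => sq_nonneg _
  refine ⟨hT, hsum, ?_⟩
  rw [hT, hvar, hq_int, horth]
  constructor
  · intro h
    constructor
    · rw [hθsq, div_mul_eq_mul_div, le_div_iff₀ htrace]
      nlinarith
    · rw [hνsq, div_mul_eq_mul_div, le_div_iff₀ htrace]
      nlinarith
  · rintro ⟨h1, h2⟩
    have h3 : θsq * ‖g‖ ^ 2 + νsq * ‖g‖ ^ 2 = ε ^ 2 * ‖g‖ ^ 2 := by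
      rw [← hsum]; ring
    linarith
end

section
/- (One-step SGD contraction under the norm test) Let F : ℝ^d → ℝ be differentiable with L-Lipschitz gradient and μ-strongly convex with 0 < μ ≤ L, and let ξ* be its (unique) global minimizer. Fix x ∈ ℝ^d and ε > 0, and let υ be a square-integrable random vector in ℝ^d with E[υ] = ∇F(x) and E[‖υ − ∇F(x)‖²] ≤ ε²‖∇F(x)‖². Then with step size η = 2/((L+μ)(1+ε²)), the update x⁺ := x − η·υ satisfies E[‖x⁺ − ξ*‖²] ≤ ρ·‖x − ξ*‖², where ρ = (((κ−1)/(κ+1))² + ε²)/(1 + ε²) and κ = L/μ. -/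
open MeasureTheory ProbabilityTheory
open scoped RealInnerProductSpace

set_option linter.unusedSectionVars false

section Aux

variable {E : Type*} [NormedAddCommGroup E] [InnerProductSpace ℝ E] [CompleteSpace E]

lemma my_descent (F : E → ℝ) (g : E → E) (L : ℝ) (hL : 0 ≤ L)
    (hgrad : ∀ x, HasGradientAt F (g x) x)
    (hLip : ∀ x y, ‖g x - g y‖ ≤ L * ‖x - y‖) (x y : E) :
    F y ≤ F x + ⟪g x, y - x⟫ + L / 2 * ‖y - x‖ ^ 2 := by
  set v := y - x with hv
  have hgc : Continuous g := by
    have : LipschitzWith (Real.toNNReal L) g := by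
      rw [lipschitzWith_iff_dist_le_mul]
      intro a b
      rw [dist_eq_norm, dist_eq_norm]
      exact (hLip a b).trans (by rw [Real.coe_toNNReal L hL])
    exact this.continuous
  have hline : ∀ t : ℝ, HasDerivAt (fun t : ℝ => F (x + t • v)) ⟪g (x + t • v), v⟫ t := by
    intro t
    have h1 : HasDerivAt (fun t : ℝ => x + t • v) v t := by
      simpa using ((hasDerivAt_id t).smul_const v).const_add x
    have h2 := ((hgrad (x + t • v)).hasFDerivAt.comp_hasDerivAt t h1)
    simp [InnerProductSpace.toDual_apply_apply] at h2
    exact h2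
  have hcont : Continuous fun t : ℝ => ⟪g (x + t • v), v⟫ := by
    exact (hgc.comp (by continuity)).inner continuous_const
  have key : ∫ t in (0:ℝ)..1, ⟪g (x + t • v), v⟫ = F (x + (1:ℝ) • v) - F (x + (0:ℝ) • v) :=
    intervalIntegral.integral_eq_sub_of_hasDerivAt (fun t _ => hline t)
      (hcont.intervalIntegrable 0 1)
  have hbound : ∫ t in (0:ℝ)..1, ⟪g (x + t • v), v⟫ ≤
      ∫ t in (0:ℝ)..1, (⟪g x, v⟫ + L * t * ‖v‖ ^ 2) := by
    apply intervalIntegral.integral_mono_on (by norm_num) (hcont.intervalIntegrable 0 1)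
      ((by continuity : Continuous fun t : ℝ => (⟪g x, v⟫ + L * t * ‖v‖ ^ 2)).intervalIntegrable 0 1)
    intro t ht
    have h1 : ⟪g (x + t • v), v⟫ = ⟪g x, v⟫ + ⟪g (x + t • v) - g x, v⟫ := by
      rw [inner_sub_left]; ring
    have h2 : ⟪g (x + t • v) - g x, v⟫ ≤ ‖g (x + t • v) - g x‖ * ‖v‖ :=
      real_inner_le_norm _ _
    have h3 : ‖g (x + t • v) - g x‖ ≤ L * (t * ‖v‖) := by
      have := hLip (x + t • v) x
      simpa [norm_smul, abs_of_nonneg ht.1] using this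
    have h4 : ‖g (x + t • v) - g x‖ * ‖v‖ ≤ L * (t * ‖v‖) * ‖v‖ := by
      exact mul_le_mul_of_nonneg_right h3 (norm_nonneg v)
    rw [h1]
    nlinarith [norm_nonneg v]
  have hval : ∫ t in (0:ℝ)..1, (⟪g x, v⟫ + L * t * ‖v‖ ^ 2) = ⟪g x, v⟫ + L / 2 * ‖v‖ ^ 2 := by
    have h1 : ∀ t : ℝ, ⟪g x, v⟫ + L * t * ‖v‖ ^ 2 = ⟪g x, v⟫ + (L * ‖v‖ ^ 2) * t := by
      intro t; ring
    simp_rw [h1]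
    rw [intervalIntegral.integral_add intervalIntegrable_const
      (intervalIntegral.intervalIntegrable_id.const_mul _),
      intervalIntegral.integral_const_mul, integral_id, intervalIntegral.integral_const]
    norm_num
    ring
  have h10 : x + (1:ℝ) • v = y := by rw [hv]; simp
  have h00 : x + (0:ℝ) • v = x := by simp
  rw [h10, h00] at key
  linarith [hbound.trans_eq hval, key.symm.le, key.le]

lemma my_coco (h : E → ℝ) (gh : E → E) (M : ℝ) (hM : 0 < M)
    (hconv : ∀ a b, h a + ⟪gh a, b - a⟫ ≤ h b)
    (hdesc : ∀ a b, h b ≤ h a + ⟪gh a, b - a⟫ + M / 2 * ‖b - a‖ ^ 2)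
    (a b : E) : (1 / M) * ‖gh a - gh b‖ ^ 2 ≤ ⟪gh a - gh b, a - b⟫ := by
  have key : ∀ p q, h p + ⟪gh p, q - p⟫ + 1 / (2 * M) * ‖gh q - gh p‖ ^ 2 ≤ h q := by
    intro p q
    set z := q - (1 / M) • (gh q - gh p) with hz
    have h1 := hconv p z
    have h2 := hdesc q z
    have e1 : z - q = -((1 / M) • (gh q - gh p)) := by rw [hz]; abel
    have e2 : z - p = (q - p) - (1 / M) • (gh q - gh p) := by rw [hz]; abel
    rw [e1] at h2
    rw [e2] at h1
    rw [inner_sub_right, real_inner_smul_right] at h1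
    rw [inner_neg_right, real_inner_smul_right, norm_neg, norm_smul, mul_pow] at h2
    have e3 : ‖(1 / M : ℝ)‖ = 1 / M := by
      rw [Real.norm_eq_abs]; exact abs_of_pos (by positivity)
    rw [e3] at h2
    have e4 : ⟪gh q, gh q - gh p⟫ - ⟪gh p, gh q - gh p⟫ = ‖gh q - gh p‖ ^ 2 := by
      rw [← inner_sub_left, real_inner_self_eq_norm_sq]
    have hM' : M ≠ 0 := ne_of_gt hM
    have e4' : 1 / M * ⟪gh q, gh q - gh p⟫ - 1 / M * ⟪gh p, gh q - gh p⟫ =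
        1 / M * ‖gh q - gh p‖ ^ 2 := by
      rw [← mul_sub, e4]
    have e8 : M / 2 * ((1 / M) ^ 2 * ‖gh q - gh p‖ ^ 2) = 1 / (2 * M) * ‖gh q - gh p‖ ^ 2 := by
      field_simp
    have e9 : 1 / M * ‖gh q - gh p‖ ^ 2 - 1 / (2 * M) * ‖gh q - gh p‖ ^ 2 =
        1 / (2 * M) * ‖gh q - gh p‖ ^ 2 := by
      field_simp; ring
    linarith
  have k1 := key a b
  have k2 := key b a
  have e5 : ‖gh a - gh b‖ = ‖gh b - gh a‖ := norm_sub_rev _ _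
  have e6 : ⟪gh a, b - a⟫ + ⟪gh b, a - b⟫ = -⟪gh a - gh b, a - b⟫ := by
    rw [inner_sub_left]
    have : ⟪gh a, b - a⟫ = -⟪gh a, a - b⟫ := by rw [← inner_neg_right]; congr 1; abel
    rw [this]; ring
  have hM' : M ≠ 0 := ne_of_gt hM
  rw [e5] at k2
  have : 2 * (1 / (2 * M) * ‖gh b - gh a‖ ^ 2) ≤ ⟪gh a - gh b, a - b⟫ := by linarith
  have e7 : 2 * (1 / (2 * M) * ‖gh b - gh a‖ ^ 2) = (1 / M) * ‖gh b - gh a‖ ^ 2 := by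
    field_simp
  rw [e5]
  linarith

lemma my_coercive (F : E → ℝ) (g : E → E) (L μ : ℝ) (hμ : 0 < μ) (hμL : μ ≤ L)
    (hgrad : ∀ x, HasGradientAt F (g x) x)
    (hLip : ∀ x y, ‖g x - g y‖ ≤ L * ‖x - y‖)
    (hsc : ∀ x y, F y ≥ F x + ⟪g x, y - x⟫ + μ / 2 * ‖y - x‖ ^ 2)
    (a b : E) :
    ‖g a - g b‖ ^ 2 + μ * L * ‖a - b‖ ^ 2 ≤ (L + μ) * ⟪g a - g b, a - b⟫ := by
  have hL : 0 ≤ L := le_trans hμ.le hμL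
  -- strong monotonicity
  have hmono : μ * ‖a - b‖ ^ 2 ≤ ⟪g a - g b, a - b⟫ := by
    have h1 := hsc a b
    have h2 := hsc b a
    have e1 : ⟪g a, a - b⟫ = -⟪g a, b - a⟫ := by
      rw [← inner_neg_right]; congr 1; abel
    have e2 : ‖a - b‖ = ‖b - a‖ := norm_sub_rev _ _
    rw [e2] at h2
    rw [inner_sub_left, e1, e2]
    linarith
  rcases eq_or_lt_of_le hμL with heq | hlt
  · -- μ = L
    subst heq
    have h1 : ‖g a - g b‖ ^ 2 ≤ μ ^ 2 * ‖a - b‖ ^ 2 := by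
      nlinarith [hLip a b, norm_nonneg (g a - g b), norm_nonneg (a - b)]
    nlinarith [hmono]
  · -- μ < L
    set h : E → ℝ := fun z => F z - μ / 2 * ‖z‖ ^ 2 with hh
    set gh : E → E := fun z => g z - μ • z with hgh
    have hker : ∀ p q : E, ⟪g p, q - p⟫ + μ / 2 * ‖q - p‖ ^ 2 - (μ / 2 * ‖q‖ ^ 2 - μ / 2 * ‖p‖ ^ 2)
        = ⟪gh p, q - p⟫ := by
      intro p q
      rw [hgh]
      simp only [inner_sub_left, real_inner_smul_left]
      rw [norm_sub_sq_real]
      have : ⟪p, q - p⟫ = ⟪p, q⟫ - ‖p‖ ^ 2 := by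
        rw [inner_sub_right, real_inner_self_eq_norm_sq]
      rw [this]
      rw [real_inner_comm q p]
      ring
    have hconv : ∀ p q, h p + ⟪gh p, q - p⟫ ≤ h q := by
      intro p q
      have := hsc p q
      have hk := hker p q
      simp only [hh]
      linarith
    have hdesc : ∀ p q, h q ≤ h p + ⟪gh p, q - p⟫ + (L - μ) / 2 * ‖q - p‖ ^ 2 := by
      intro p q
      have := my_descent F g L hL hgrad hLip p q
      have hk := hker p q
      simp only [hh]
      nlinarith [this, hk]
    have hco := my_coco h gh (L - μ) (by linarith) hconv hdesc a b
    have hexp1 : gh a - gh b = (g a - g b) - μ • (a - b) := by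
      rw [hgh]; simp only; rw [smul_sub]; abel
    have hexp2 : ‖gh a - gh b‖ ^ 2 =
        ‖g a - g b‖ ^ 2 - 2 * μ * ⟪g a - g b, a - b⟫ + μ ^ 2 * ‖a - b‖ ^ 2 := by
      rw [hexp1, norm_sub_sq_real, real_inner_smul_right, norm_smul, mul_pow]
      rw [Real.norm_eq_abs, sq_abs]
      ring
    have hexp3 : ⟪gh a - gh b, a - b⟫ = ⟪g a - g b, a - b⟫ - μ * ‖a - b‖ ^ 2 := by
      rw [hexp1, inner_sub_left, real_inner_smul_left, real_inner_self_eq_norm_sq]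
    rw [hexp2, hexp3] at hco
    have hLμ : 0 < L - μ := by linarith
    have := mul_le_mul_of_nonneg_left hco hLμ.le
    have hcl : (L - μ) * ((1 / (L - μ)) *
        (‖g a - g b‖ ^ 2 - 2 * μ * ⟪g a - g b, a - b⟫ + μ ^ 2 * ‖a - b‖ ^ 2)) =
        ‖g a - g b‖ ^ 2 - 2 * μ * ⟪g a - g b, a - b⟫ + μ ^ 2 * ‖a - b‖ ^ 2 := by
      field_simp
    rw [hcl] at this
    nlinarith [this]

end Aux

/-- **One-step SGD contraction under the norm test.** Let `F : ℝ^d → ℝ`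
be differentiable with `L`-Lipschitz gradient and `μ`-strongly convex with `0 < μ ≤ L`,
with global minimizer `ξ*`. Fix `x` and `ε > 0`, and let `υ` be a square-integrable
random vector with `E[υ] = ∇F(x)` and `E[‖υ − ∇F(x)‖²] ≤ ε²‖∇F(x)‖²`. Then with step
size `η = 2/((L+μ)(1+ε²))`, the update `x⁺ := x − η•υ` satisfies
`E[‖x⁺ − ξ*‖²] ≤ ρ‖x − ξ*‖²`, where `ρ = (((κ−1)/(κ+1))² + ε²)/(1 + ε²)`, `κ = L/μ`. -/
theorem sgd_one_step_contraction_norm_test {d : ℕ} {Ω : Type*} [MeasurableSpace Ω]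
    (P : Measure Ω) [IsProbabilityMeasure P]
    (F : EuclideanSpace ℝ (Fin d) → ℝ) (gradF : EuclideanSpace ℝ (Fin d) → EuclideanSpace ℝ (Fin d))
    (hgrad : ∀ x, HasGradientAt F (gradF x) x)
    (L μ : ℝ) (hμ : 0 < μ) (hμL : μ ≤ L)
    (hLip : ∀ x y, ‖gradF x - gradF y‖ ≤ L * ‖x - y‖)
    (hsc : ∀ x y, F y ≥ F x + ⟪gradF x, y - x⟫ + μ / 2 * ‖y - x‖ ^ 2)
    (ξstar : EuclideanSpace ℝ (Fin d)) (hmin : ∀ y, F ξstar ≤ F y)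
    (x : EuclideanSpace ℝ (Fin d)) (ε : ℝ) (hε : 0 < ε)
    (υ : Ω → EuclideanSpace ℝ (Fin d))
    (hsq : MemLp υ 2 P)
    (hmean : ∫ ω, υ ω ∂P = gradF x)
    (hnormtest : ∫ ω, ‖υ ω - gradF x‖ ^ 2 ∂P ≤ ε ^ 2 * ‖gradF x‖ ^ 2)
    (η : ℝ) (hη : η = 2 / ((L + μ) * (1 + ε ^ 2)))
    (κ ρ : ℝ) (hκ : κ = L / μ)
    (hρ : ρ = (((κ - 1) / (κ + 1)) ^ 2 + ε ^ 2) / (1 + ε ^ 2)) :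
    ∫ ω, ‖(x - η • υ ω) - ξstar‖ ^ 2 ∂P ≤ ρ * ‖x - ξstar‖ ^ 2 := by
  have hLpos : 0 < L := lt_of_lt_of_le hμ hμL
  have hA : (0:ℝ) < L + μ := by linarith
  have hB : (0:ℝ) < 1 + ε ^ 2 := by positivity
  have hηpos : 0 < η := by rw [hη]; positivity
  -- gradient vanishes at the minimizer
  have hg0 : gradF ξstar = 0 := by
    have h1 : IsLocalMin F ξstar := Filter.Eventually.of_forall hmin
    have h2 := h1.hasFDerivAt_eq_zero (hgrad ξstar).hasFDerivAt
    have h3 := congrArg (fun f => (InnerProductSpace.toDual ℝ _).symm f) h2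
    simpa using h3
  set g : EuclideanSpace ℝ (Fin d) := gradF x with hgdef
  set e : EuclideanSpace ℝ (Fin d) := x - ξstar with hedef
  set c : EuclideanSpace ℝ (Fin d) := e - η • g with hcdef
  -- coercivity at (x, ξstar)
  have hcoer : ‖g‖ ^ 2 + μ * L * ‖e‖ ^ 2 ≤ (L + μ) * ⟪g, e⟫ := by
    have := my_coercive F gradF L μ hμ hμL hgrad hLip hsc x ξstar
    rw [hg0] at this
    simpa [hgdef, hedef] using this
  -- pointwise expansion
  have hexp : ∀ ω, ‖(x - η • υ ω) - ξstar‖ ^ 2 =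
      ‖c‖ ^ 2 - 2 * η * ⟪c, υ ω - g⟫ + η ^ 2 * ‖υ ω - g‖ ^ 2 := by
    intro ω
    have hre : (x - η • υ ω) - ξstar = c - η • (υ ω - g) := by
      rw [hcdef, hedef, smul_sub]; abel
    rw [hre, norm_sub_sq_real, real_inner_smul_right, norm_smul, mul_pow,
      Real.norm_eq_abs, sq_abs]
    ring
  -- integrability facts
  have hWmem : MemLp (fun ω => υ ω - g) 2 P := hsq.sub (memLp_const g)
  have hWi : Integrable (fun ω => υ ω - g) P := hWmem.integrable one_le_two
  have hWn2 : Integrable (fun ω => ‖υ ω - g‖ ^ 2) P :=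
    (memLp_two_iff_integrable_sq_norm hWmem.aestronglyMeasurable).mp hWmem
  have hinner : Integrable (fun ω => ⟪c, υ ω - g⟫) P := hWi.const_inner c
  have hmean0 : ∫ ω, (υ ω - g) ∂P = 0 := by
    rw [integral_sub (hsq.integrable one_le_two) (integrable_const g), hmean, integral_const]
    simp [hgdef]
  have hic : ∫ ω, ⟪c, υ ω - g⟫ ∂P = 0 := by
    rw [integral_inner hWi c, hmean0, inner_zero_right]
  -- compute the integral
  have hint : ∫ ω, ‖(x - η • υ ω) - ξstar‖ ^ 2 ∂P =
      ‖c‖ ^ 2 + η ^ 2 * ∫ ω, ‖υ ω - g‖ ^ 2 ∂P := by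
    rw [show (fun ω => ‖(x - η • υ ω) - ξstar‖ ^ 2) = fun ω =>
        ‖c‖ ^ 2 - 2 * η * ⟪c, υ ω - g⟫ + η ^ 2 * ‖υ ω - g‖ ^ 2 from funext hexp]
    have hI1 : Integrable (fun ω => ‖c‖ ^ 2 - 2 * η * ⟪c, υ ω - g⟫) P :=
      Integrable.sub (integrable_const _) (hinner.const_mul _)
    have hI2 : Integrable (fun ω => η ^ 2 * ‖υ ω - g‖ ^ 2) P := hWn2.const_mul _
    rw [integral_add hI1 hI2,
      integral_sub (integrable_const _) (hinner.const_mul _),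
      integral_const_mul, integral_const_mul, hic, integral_const]
    simp
  rw [hint]
  have hstep1 : ‖c‖ ^ 2 + η ^ 2 * ∫ ω, ‖υ ω - g‖ ^ 2 ∂P ≤
      ‖c‖ ^ 2 + η ^ 2 * (ε ^ 2 * ‖g‖ ^ 2) := by
    have h := mul_le_mul_of_nonneg_left hnormtest (sq_nonneg η)
    linarith
  refine hstep1.trans ?_
  -- deterministic contraction
  have hc2 : ‖c‖ ^ 2 = ‖e‖ ^ 2 - 2 * η * ⟪g, e⟫ + η ^ 2 * ‖g‖ ^ 2 := by
    rw [hcdef, norm_sub_sq_real, real_inner_smul_right, norm_smul, mul_pow,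
      Real.norm_eq_abs, sq_abs, real_inner_comm]
    ring
  rw [hc2]
  have hη2 : η * ((L + μ) * (1 + ε ^ 2)) = 2 := by
    rw [hη]; field_simp
  have hρ2 : ρ * ((1 + ε ^ 2) * (L + μ) ^ 2) = (L - μ) ^ 2 + ε ^ 2 * (L + μ) ^ 2 := by
    have hμ' : μ ≠ 0 := ne_of_gt hμ
    have hfrac : (κ - 1) / (κ + 1) = (L - μ) / (L + μ) := by
      rw [hκ]
      rw [div_eq_div_iff (by rw [hκ] at *; positivity) hA.ne']
      field_simp
    have hBne : (1 + ε ^ 2 : ℝ) ≠ 0 := ne_of_gt hB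
    have hAne : ((L + μ) ^ 2 : ℝ) ≠ 0 := by positivity
    rw [hρ, hfrac, div_pow, div_add' _ _ _ hAne, div_div, div_mul_eq_mul_div,
      mul_comm ((L + μ) ^ 2) (1 + ε ^ 2), mul_div_assoc,
      div_self (by positivity : ((1 + ε ^ 2) * (L + μ) ^ 2 : ℝ) ≠ 0), mul_one]
  set S : ℝ := ⟪g, e⟫ with hS
  set G : ℝ := ‖g‖ ^ 2 with hG
  set N : ℝ := ‖e‖ ^ 2 with hN
  have hGnn : 0 ≤ G := by rw [hG]; positivity
  have hNnn : 0 ≤ N := by rw [hN]; positivity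
  -- multiply out: suffices scaled inequality
  rw [← mul_le_mul_iff_left₀ (show (0:ℝ) < (1 + ε ^ 2) * (L + μ) ^ 2 by positivity)]
  have key1 : (2 * η * S) * ((1 + ε ^ 2) * (L + μ) ^ 2) = 4 * S * (L + μ) := by
    linear_combination (2 * S * (L + μ)) * hη2
  have key2 : (η ^ 2 * G + η ^ 2 * (ε ^ 2 * G)) * ((1 + ε ^ 2) * (L + μ) ^ 2) = 4 * G := by
    linear_combination (G * (η * ((L + μ) * (1 + ε ^ 2))) + 2 * G) * hη2
  have hρN : ρ * N * ((1 + ε ^ 2) * (L + μ) ^ 2) = N * ((L - μ) ^ 2 + ε ^ 2 * (L + μ) ^ 2) := by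
    linear_combination N * hρ2
  linarith [hcoer, key1, key2, hρN]
end

section
/- (Proposition: linear convergence of SGD under the norm test) Let F : ℝ^d → ℝ be differentiable with L-Lipschitz gradient and μ-strongly convex with 0 < μ ≤ L, with unique minimizer ξ*. Let (ξ_k)_{k≥0} be a sequence of square-integrable random vectors generated by ξ_{k+1} = ξ_k − η·υ_k with constant step size η = 2/((L+μ)(1+ε²)), where for each k the estimator υ_k is conditionally unbiased, E[υ_k | ℱ_k] = ∇F(ξ_k), and satisfies the norm test E[‖υ_k − ∇F(ξ_k)‖² | ℱ_k] ≤ ε²‖∇F(ξ_k)‖² almost surely, with ℱ_k the σ-algebra generated by ξ_0, …, ξ_k. Then for all k ≥ 0, E[‖ξ_k − ξ*‖²] ≤ ρ^k · E[‖ξ_0 − ξ*‖²], where ρ = (((κ−1)/(κ+1))² + ε²)/(1 + ε²) and κ = L/μ. -/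
open MeasureTheory ProbabilityTheory
open scoped RealInnerProductSpace

open MeasureTheory ProbabilityTheory
open scoped RealInnerProductSpace

section DetAux

variable {E : Type*} [NormedAddCommGroup E] [InnerProductSpace ℝ E] [CompleteSpace E]

lemma sgd_aux_descent {F : E → ℝ} {g : E → E} (hgrad : ∀ x, HasGradientAt F (g x) x)
    {L : ℝ} (hL : 0 ≤ L) (hLip : ∀ x y, ‖g x - g y‖ ≤ L * ‖x - y‖) (x y : E) :
    F y ≤ F x + ⟪g x, y - x⟫ + L / 2 * ‖y - x‖ ^ 2 := by
  set u := y - x with hu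
  have hc : ∀ t : ℝ, HasDerivAt (fun t : ℝ => F (x + t • u)) ⟪g (x + t • u), u⟫ t := by
    intro t
    have h1 : HasDerivAt (fun t : ℝ => x + t • u) u t := by
      simpa using ((hasDerivAt_id t).smul_const u).const_add x
    have h2 := (hgrad (x + t • u)).hasFDerivAt.comp_hasDerivAt t h1
    simpa [InnerProductSpace.toDual_apply_apply, Function.comp_def] using h2
  set ψ : ℝ → ℝ := fun t => F (x + t • u) - t * ⟪g x, u⟫ - t ^ 2 * (L / 2 * ‖u‖ ^ 2) with hψdef
  have hψ : ∀ t : ℝ, HasDerivAt ψ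
      (⟪g (x + t • u), u⟫ - ⟪g x, u⟫ - 2 * t * (L / 2 * ‖u‖ ^ 2)) t := by
    intro t
    have h3 : HasDerivAt (fun t : ℝ => t * ⟪g x, u⟫) ⟪g x, u⟫ t := by
      simpa using (hasDerivAt_id t).mul_const ⟪g x, u⟫
    have h4 : HasDerivAt (fun t : ℝ => t ^ 2 * (L / 2 * ‖u‖ ^ 2))
        (2 * t * (L / 2 * ‖u‖ ^ 2)) t := by
      have := (hasDerivAt_pow 2 t).mul_const (L / 2 * ‖u‖ ^ 2)
      simpa [pow_one] using this
    exact ((hc t).sub h3).sub h4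
  have hdiff : Differentiable ℝ ψ := fun t => (hψ t).differentiableAt
  have hanti : AntitoneOn ψ (Set.Icc (0:ℝ) 1) := by
    apply antitoneOn_of_deriv_nonpos (convex_Icc 0 1) hdiff.continuous.continuousOn
      hdiff.differentiableOn
    intro t ht
    rw [interior_Icc] at ht
    rw [(hψ t).deriv]
    have h5 : ‖g (x + t • u) - g x‖ ≤ L * (t * ‖u‖) := by
      have := hLip (x + t • u) x
      simpa [add_sub_cancel_left, norm_smul, abs_of_pos ht.1, mul_assoc] using this
    have hb : ⟪g (x + t • u), u⟫ - ⟪g x, u⟫ ≤ L * t * ‖u‖ ^ 2 := by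
      rw [← inner_sub_left]
      calc ⟪g (x + t • u) - g x, u⟫ ≤ ‖g (x + t • u) - g x‖ * ‖u‖ := real_inner_le_norm _ _
        _ ≤ L * (t * ‖u‖) * ‖u‖ := by
            exact mul_le_mul_of_nonneg_right h5 (norm_nonneg u)
        _ = L * t * ‖u‖ ^ 2 := by ring
    nlinarith [hb]
  have h01 := hanti (Set.left_mem_Icc.mpr zero_le_one) (Set.right_mem_Icc.mpr zero_le_one)
    zero_le_one
  have e0 : ψ 0 = F x := by simp [hψdef]
  have e1 : ψ 1 = F y - ⟪g x, u⟫ - L / 2 * ‖u‖ ^ 2 := by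
    simp only [hψdef, hu, one_smul, one_pow, one_mul, add_sub_cancel]
  rw [e0, e1] at h01
  linarith

lemma sgd_aux_gradzero {F : E → ℝ} {g : E → E} (hgrad : ∀ x, HasGradientAt F (g x) x)
    {L : ℝ} (hL : 0 < L) (hLip : ∀ x y, ‖g x - g y‖ ≤ L * ‖x - y‖)
    {z : E} (hmin : ∀ y, F z ≤ F y) : g z = 0 := by
  have h := sgd_aux_descent hgrad hL.le hLip z (z - (1 / L) • g z)
  have h2 := hmin (z - (1 / L) • g z)
  have e : (z - (1 / L) • g z) - z = -((1 / L) • g z) := by abel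
  rw [e, inner_neg_right, real_inner_smul_right, real_inner_self_eq_norm_sq, norm_neg,
    norm_smul, Real.norm_eq_abs] at h
  have habs : |1 / L| = 1 / L := abs_of_pos (by positivity)
  rw [habs] at h
  have e7 : L / 2 * (1 / L * ‖g z‖) ^ 2 = 1 / (2 * L) * ‖g z‖ ^ 2 := by
    field_simp
  have e8 : 1 / L * ‖g z‖ ^ 2 = 2 * (1 / (2 * L) * ‖g z‖ ^ 2) := by ring
  have hsq' : 1 / (2 * L) * ‖g z‖ ^ 2 ≤ 1 / (2 * L) * 0 := by
    rw [mul_zero]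
    linarith [h, h2, e7, e8]
  have hc : (0 : ℝ) < 1 / (2 * L) := by positivity
  have hsq : ‖g z‖ ^ 2 ≤ 0 := (mul_le_mul_iff_right₀ hc).mp hsq'
  have h9 : ‖g z‖ ^ 2 = 0 := le_antisymm hsq (sq_nonneg _)
  rw [pow_eq_zero_iff two_ne_zero] at h9
  exact norm_eq_zero.mp h9

lemma sgd_aux_coco {G : E → ℝ} {gG : E → E} {M : ℝ} (hM : 0 < M)
    (hlow : ∀ x y, G x + ⟪gG x, y - x⟫ ≤ G y)
    (hup : ∀ x y, G y ≤ G x + ⟪gG x, y - x⟫ + M / 2 * ‖y - x‖ ^ 2)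
    (x y : E) : (1 / M) * ‖gG x - gG y‖ ^ 2 ≤ ⟪gG x - gG y, x - y⟫ := by
  have half : ∀ a b : E, G a + ⟪gG a, b - a⟫ + 1 / (2 * M) * ‖gG b - gG a‖ ^ 2 ≤ G b := by
    intro a b
    set w := gG b - gG a with hw
    set z := b - (1 / M) • w with hz
    have h1 := hlow a z
    have h2 := hup b z
    have ezx : z - a = (b - a) - (1 / M) • w := by rw [hz]; abel
    have ezy : z - b = -((1 / M) • w) := by rw [hz]; abel
    have enorm : ‖z - b‖ ^ 2 = (1 / M) ^ 2 * ‖w‖ ^ 2 := by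
      rw [ezy, norm_neg, norm_smul, mul_pow, Real.norm_eq_abs, sq_abs]
    rw [ezx, inner_sub_right, real_inner_smul_right] at h1
    rw [enorm, ezy, inner_neg_right, real_inner_smul_right] at h2
    have e4 : ⟪gG b, w⟫ - ⟪gG a, w⟫ = ‖w‖ ^ 2 := by
      rw [← inner_sub_left, ← hw, real_inner_self_eq_norm_sq]
    have e4' : (1 / M) * ⟪gG b, w⟫ - (1 / M) * ⟪gG a, w⟫ = (1 / M) * ‖w‖ ^ 2 := by
      linear_combination (1 / M) * e4
    have e5 : M / 2 * ((1 / M) ^ 2 * ‖w‖ ^ 2) = 1 / (2 * M) * ‖w‖ ^ 2 := by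
      field_simp
    have e6 : (1 / M) * ‖w‖ ^ 2 = 2 * (1 / (2 * M) * ‖w‖ ^ 2) := by ring
    linarith [h1, h2, e4', e5, e6]
  have hxy := half x y
  have hyx := half y x
  have en : ‖gG y - gG x‖ = ‖gG x - gG y‖ := norm_sub_rev _ _
  have ei : ⟪gG x, y - x⟫ = -⟪gG x, x - y⟫ := by rw [← inner_neg_right, neg_sub]
  have ei2 : ⟪gG y, x - y⟫ = -⟪gG y, y - x⟫ := by rw [← inner_neg_right, neg_sub]
  have eg : ⟪gG x - gG y, x - y⟫ = ⟪gG x, x - y⟫ - ⟪gG y, x - y⟫ := inner_sub_left _ _ _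
  have hhalfM : (1 : ℝ) / M = 2 * (1 / (2 * M)) := by field_simp
  rw [en] at hxy
  rw [eg, hhalfM]
  rw [ei] at hxy
  rw [ei2] at hyx
  linarith [hxy, hyx]

lemma sgd_aux_coercive {F : E → ℝ} {g : E → E} (hgrad : ∀ x, HasGradientAt F (g x) x)
    {L μ : ℝ} (hμ : 0 < μ) (hμL : μ ≤ L)
    (hLip : ∀ x y, ‖g x - g y‖ ≤ L * ‖x - y‖)
    (hsc : ∀ x y, F x + ⟪g x, y - x⟫ + μ / 2 * ‖y - x‖ ^ 2 ≤ F y) (x y : E) :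
    μ * L / (μ + L) * ‖x - y‖ ^ 2 + 1 / (μ + L) * ‖g x - g y‖ ^ 2 ≤ ⟪g x - g y, x - y⟫ := by
  have hL : 0 < L := lt_of_lt_of_le hμ hμL
  have hμLpos : 0 < μ + L := by linarith
  have hmono : μ * ‖x - y‖ ^ 2 ≤ ⟪g x - g y, x - y⟫ := by
    have h1 := hsc x y
    have h2 := hsc y x
    have ei : ⟪g x, y - x⟫ = -⟪g x, x - y⟫ := by rw [← inner_neg_right, neg_sub]
    have eg : ⟪g x - g y, x - y⟫ = ⟪g x, x - y⟫ - ⟪g y, x - y⟫ := inner_sub_left _ _ _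
    have en : ‖y - x‖ = ‖x - y‖ := norm_sub_rev _ _
    rw [en, ei] at h1
    rw [eg]
    linarith
  rcases eq_or_lt_of_le hμL with heq | hlt
  · subst heq
    have hnle : ‖g x - g y‖ ≤ μ * ‖x - y‖ := hLip x y
    have hgoal : (μ * μ * ‖x - y‖ ^ 2 + ‖g x - g y‖ ^ 2) / (μ + μ) ≤ ⟪g x - g y, x - y⟫ := by
      rw [div_le_iff₀ (by linarith)]
      nlinarith [hmono, hnle, norm_nonneg (g x - g y), norm_nonneg (x - y)]
    have e : μ * μ / (μ + μ) * ‖x - y‖ ^ 2 + 1 / (μ + μ) * ‖g x - g y‖ ^ 2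
        = (μ * μ * ‖x - y‖ ^ 2 + ‖g x - g y‖ ^ 2) / (μ + μ) := by ring
    rw [e]
    exact hgoal
  · set G : E → ℝ := fun z => F z - μ / 2 * ‖z‖ ^ 2 with hG
    set gG : E → E := fun z => g z - μ • z with hgG
    have hid : ∀ a b : E, ‖b‖ ^ 2 = ‖a‖ ^ 2 + 2 * ⟪a, b - a⟫ + ‖b - a‖ ^ 2 := by
      intro a b
      have := norm_add_sq_real a (b - a)
      rwa [add_sub_cancel] at this
    have hinner : ∀ a b : E, ⟪gG a, b - a⟫ = ⟪g a, b - a⟫ - μ * ⟪a, b - a⟫ := by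
      intro a b
      simp [hgG, inner_sub_left, real_inner_smul_left]
    have hlow : ∀ a b, G a + ⟪gG a, b - a⟫ ≤ G b := by
      intro a b
      have h1 := hsc a b
      have h2 := hid a b
      have h3 := hinner a b
      simp only [hG]
      nlinarith [h1, h2, h3]
    have hup : ∀ a b, G b ≤ G a + ⟪gG a, b - a⟫ + (L - μ) / 2 * ‖b - a‖ ^ 2 := by
      intro a b
      have h1 := sgd_aux_descent hgrad hL.le hLip a b
      have h2 := hid a b
      have h3 := hinner a b
      simp only [hG]
      nlinarith [h1, h2, h3]
    have hcoco := sgd_aux_coco (sub_pos.mpr hlt) hlow hup x y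
    have ev : gG x - gG y = (g x - g y) - μ • (x - y) := by
      simp only [hgG, smul_sub]
      abel
    rw [ev] at hcoco
    have e1 : ‖(g x - g y) - μ • (x - y)‖ ^ 2
        = ‖g x - g y‖ ^ 2 - 2 * μ * ⟪g x - g y, x - y⟫ + μ ^ 2 * ‖x - y‖ ^ 2 := by
      rw [norm_sub_sq_real, real_inner_smul_right, norm_smul, mul_pow, Real.norm_eq_abs, sq_abs]
      ring
    have e2 : ⟪(g x - g y) - μ • (x - y), x - y⟫
        = ⟪g x - g y, x - y⟫ - μ * ‖x - y‖ ^ 2 := by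
      rw [inner_sub_left, real_inner_smul_left, real_inner_self_eq_norm_sq]
    rw [e1, e2] at hcoco
    have hLμ : 0 < L - μ := sub_pos.mpr hlt
    have hinv : (L - μ) * (1 / (L - μ)) = 1 := mul_one_div_cancel hLμ.ne'
    have step1 : ‖g x - g y‖ ^ 2 + μ * L * ‖x - y‖ ^ 2 ≤ (L + μ) * ⟪g x - g y, x - y⟫ := by
      have := mul_le_mul_of_nonneg_left hcoco hLμ.le
      nlinarith [this, hinv]
    have hgoal : (μ * L * ‖x - y‖ ^ 2 + ‖g x - g y‖ ^ 2) / (μ + L) ≤ ⟪g x - g y, x - y⟫ := by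
      rw [div_le_iff₀ hμLpos]
      linarith
    have e : μ * L / (μ + L) * ‖x - y‖ ^ 2 + 1 / (μ + L) * ‖g x - g y‖ ^ 2
        = (μ * L * ‖x - y‖ ^ 2 + ‖g x - g y‖ ^ 2) / (μ + L) := by ring
    rw [e]
    exact hgoal

end DetAux

section ProbAux

variable {Ω : Type*} {m0 : MeasurableSpace Ω} {P : Measure Ω} [IsProbabilityMeasure P]
variable {E : Type*} [NormedAddCommGroup E] [InnerProductSpace ℝ E] [SecondCountableTopology E]
  [MeasurableSpace E] [BorelSpace E]

set_option linter.unusedSectionVars false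

lemma sgd_aux_sq_integrable {X : Ω → E} (hX : MemLp X 2 P) :
    Integrable (fun ω => ‖X ω‖ ^ 2) P :=
  (memLp_two_iff_integrable_sq_norm hX.1).mp hX

lemma sgd_aux_integrable_inner {X Y : Ω → E} (hX : MemLp X 2 P) (hY : MemLp Y 2 P) :
    Integrable (fun ω => ⟪X ω, Y ω⟫) P := by
  have hdom : Integrable (fun ω => (‖X ω‖ ^ 2 + ‖Y ω‖ ^ 2) / 2) P :=
    ((sgd_aux_sq_integrable hX).add (sgd_aux_sq_integrable hY)).div_const 2
  refine hdom.mono' (hX.1.inner hY.1) (Filter.Eventually.of_forall fun ω => ?_)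
  rw [Real.norm_eq_abs]
  have h1 := abs_real_inner_le_norm (X ω) (Y ω)
  nlinarith [sq_nonneg (‖X ω‖ - ‖Y ω‖), norm_nonneg (X ω), norm_nonneg (Y ω)]

lemma sgd_aux_abs_coord_le_norm {n : ℕ} (x : EuclideanSpace ℝ (Fin n)) (i : Fin n) :
    |x i| ≤ ‖x‖ := by
  rw [EuclideanSpace.norm_eq, ← Real.sqrt_sq_eq_abs]
  apply Real.sqrt_le_sqrt
  have h := Finset.single_le_sum (f := fun j => ‖x j‖ ^ 2) (fun j _ => sq_nonneg _)
    (Finset.mem_univ i)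
  simpa [Real.norm_eq_abs, sq_abs] using h

end ProbAux

section CrossAux

lemma sgd_aux_cross {d : ℕ} {Ω : Type*} {m m0 : MeasurableSpace Ω} (hm : m ≤ m0)
    {P : Measure Ω} [IsProbabilityMeasure P]
    {X Y : Ω → EuclideanSpace ℝ (Fin d)}
    (hXm : StronglyMeasurable[m] X) (hX : MemLp X 2 P) (hY : MemLp Y 2 P)
    (hYc : P[Y|m] =ᵐ[P] 0) :
    ∫ ω, ⟪X ω, Y ω⟫ ∂P = 0 := by
  have hYint : Integrable Y P := hY.integrable one_le_two
  -- coordinatewise conditional expectation of Y vanishes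
  have hcoord : ∀ i : Fin d, P[fun ω => Y ω i|m] =ᵐ[P] 0 := by
    intro i
    have hYi_int : Integrable (fun ω => Y ω i) P :=
      (EuclideanSpace.proj i : EuclideanSpace ℝ (Fin d) →L[ℝ] ℝ).integrable_comp hYint
    have h0m : StronglyMeasurable[m] (fun _ : Ω => (0 : ℝ)) := stronglyMeasurable_const
    refine (ae_eq_condExp_of_forall_setIntegral_eq hm hYi_int
      (fun s _ _ => integrableOn_zero) (fun s hs hμs => ?_) h0m.aestronglyMeasurable).symm
    have hsint : ∫ ω in s, Y ω ∂P = 0 := by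
      have h1 : ∫ ω in s, Y ω ∂P = ∫ ω in s, (P[Y|m]) ω ∂P :=
        (setIntegral_condExp hm hYint hs).symm
      rw [h1, setIntegral_congr_ae (hm s hs) (hYc.mono fun ω hω _ => hω)]
      simp
    have h2 : ∫ ω in s, Y ω i ∂P
        = (EuclideanSpace.proj i : EuclideanSpace ℝ (Fin d) →L[ℝ] ℝ) (∫ ω in s, Y ω ∂P) :=
      ((EuclideanSpace.proj i : EuclideanSpace ℝ (Fin d) →L[ℝ] ℝ).integral_comp_comm
        hYint.integrableOn)
    rw [h2, hsint]
    simp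
  have hXint2 : MemLp X 2 P := hX
  -- integrability of coordinate products
  have hXiY : ∀ i : Fin d, Integrable (fun ω => X ω i * Y ω i) P := by
    intro i
    have hdom : Integrable (fun ω => (‖X ω‖ ^ 2 + ‖Y ω‖ ^ 2) / 2) P :=
      ((sgd_aux_sq_integrable hX).add (sgd_aux_sq_integrable hY)).div_const 2
    refine hdom.mono'
      (((EuclideanSpace.proj (𝕜 := ℝ) i).continuous.comp_aestronglyMeasurable hX.1).mul
        ((EuclideanSpace.proj (𝕜 := ℝ) i).continuous.comp_aestronglyMeasurable hY.1))
      (Filter.Eventually.of_forall fun ω => ?_)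
    rw [Real.norm_eq_abs, abs_mul]
    have h1 : |X ω i| ≤ ‖X ω‖ := sgd_aux_abs_coord_le_norm (X ω) i
    have h2 : |Y ω i| ≤ ‖Y ω‖ := sgd_aux_abs_coord_le_norm (Y ω) i
    nlinarith [abs_nonneg (X ω i), abs_nonneg (Y ω i), sq_nonneg (‖X ω‖ - ‖Y ω‖),
      norm_nonneg (X ω), norm_nonneg (Y ω)]
  have hsum : ∀ ω, ⟪X ω, Y ω⟫ = ∑ i, X ω i * Y ω i := by
    intro ω
    simp [PiLp.inner_apply, RCLike.inner_apply, conj_trivial]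
    exact Finset.sum_congr rfl fun _ _ => mul_comm _ _
  calc ∫ ω, ⟪X ω, Y ω⟫ ∂P = ∫ ω, ∑ i, X ω i * Y ω i ∂P := by
        simp_rw [hsum]
    _ = ∑ i, ∫ ω, X ω i * Y ω i ∂P := integral_finset_sum _ fun i _ => hXiY i
    _ = 0 := by
        refine Finset.sum_eq_zero fun i _ => ?_
        have hYi_int : Integrable (fun ω => Y ω i) P :=
          (EuclideanSpace.proj i : EuclideanSpace ℝ (Fin d) →L[ℝ] ℝ).integrable_comp hYint
        have hXi_meas : StronglyMeasurable[m] (fun ω => X ω i) :=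
          (EuclideanSpace.proj i : EuclideanSpace ℝ (Fin d) →L[ℝ] ℝ).continuous.comp_stronglyMeasurable hXm
        have hmul : P[(fun ω => X ω i) * (fun ω => Y ω i)|m]
            =ᵐ[P] (fun ω => X ω i) * P[fun ω => Y ω i|m] :=
          condExp_mul_of_stronglyMeasurable_left hXi_meas (hXiY i) hYi_int
        have hzero : P[(fun ω => X ω i) * (fun ω => Y ω i)|m] =ᵐ[P] 0 := by
          filter_upwards [hmul, hcoord i] with ω h1 h2
          simp only [Pi.mul_apply, h1, h2, Pi.zero_apply, mul_zero]
        have h3 : ∫ ω, X ω i * Y ω i ∂P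
            = ∫ ω, (P[(fun ω => X ω i) * (fun ω => Y ω i)|m]) ω ∂P :=
          (integral_condExp hm).symm
        rw [h3, integral_congr_ae hzero]
        simp

end CrossAux

lemma sgd_aux_algebra {L μ ε η κ ρ A B C D : ℝ} (hμ : 0 < μ) (hμL : μ ≤ L) (hε : 0 < ε)
    (hη : η = 2 / ((L + μ) * (1 + ε ^ 2))) (hκ : κ = L / μ)
    (hρ : ρ = (((κ - 1) / (κ + 1)) ^ 2 + ε ^ 2) / (1 + ε ^ 2))
    (hB0 : 0 ≤ B) (hD : D ≤ ε ^ 2 * B)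
    (hC : μ * L / (μ + L) * A + 1 / (μ + L) * B ≤ C) :
    A - 2 * η * C + η ^ 2 * (B + D) ≤ ρ * A := by
  have hL : 0 < L := lt_of_lt_of_le hμ hμL
  have hμLpos : 0 < L + μ := by linarith
  have hη0 : 0 < η := by
    rw [hη]
    exact div_pos two_pos (mul_pos hμLpos (by positivity))
  have he1 : η ^ 2 * (1 + ε ^ 2) = 2 * η * (1 / (L + μ)) := by
    rw [hη]
    field_simp
  have he2 : 1 - 2 * η * (μ * L / (μ + L)) = ρ := by
    rw [hη, hρ, hκ]
    have hκ1 : 0 < L / μ + 1 := by positivity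
    field_simp
    ring
  have step1 : A - 2 * η * C + η ^ 2 * (B + D) ≤ A - 2 * η * C + η ^ 2 * (1 + ε ^ 2) * B := by
    nlinarith [hD, sq_nonneg η]
  have step2 : A - 2 * η * C + η ^ 2 * (1 + ε ^ 2) * B
      ≤ A - 2 * η * (μ * L / (μ + L) * A + 1 / (μ + L) * B) + η ^ 2 * (1 + ε ^ 2) * B := by
    nlinarith [mul_le_mul_of_nonneg_left hC (by positivity : (0:ℝ) ≤ 2 * η)]
  have step3 : A - 2 * η * (μ * L / (μ + L) * A + 1 / (μ + L) * B)
      + η ^ 2 * (1 + ε ^ 2) * B = ρ * A := by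
    have h : A - 2 * η * (μ * L / (μ + L) * A + 1 / (μ + L) * B)
        + η ^ 2 * (1 + ε ^ 2) * B
        = (1 - 2 * η * (μ * L / (μ + L))) * A
          + (η ^ 2 * (1 + ε ^ 2) - 2 * η * (1 / (L + μ))) * B := by ring
    rw [h, he2, he1]
    ring
  linarith [step1, step2, step3.le]

set_option maxHeartbeats 1000000 in
/-- **Linear convergence of SGD under the norm test.** Let `F : ℝ^d → ℝ`
be differentiable with `L`-Lipschitz gradient and `μ`-strongly convex with `0 < μ ≤ L`,
with unique minimizer `ξ*`. Let `ξ_{k+1} = ξ_k − η•υ_k` with constant step size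
`η = 2/((L+μ)(1+ε²))`, where each `υ_k` is conditionally unbiased,
`E[υ_k | ℱ_k] = ∇F(ξ_k)`, and satisfies the norm test
`E[‖υ_k − ∇F(ξ_k)‖² | ℱ_k] ≤ ε²‖∇F(ξ_k)‖²` a.s., with `ℱ_k = σ(ξ_0, …, ξ_k)`. Then
`E[‖ξ_k − ξ*‖²] ≤ ρ^k E[‖ξ_0 − ξ*‖²]` with `ρ = (((κ−1)/(κ+1))² + ε²)/(1+ε²)`,
`κ = L/μ`. -/
theorem sgd_linear_convergence_norm_test {d : ℕ} {Ω : Type*} [MeasurableSpace Ω]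
    (P : Measure Ω) [IsProbabilityMeasure P]
    (F : EuclideanSpace ℝ (Fin d) → ℝ)
    (gradF : EuclideanSpace ℝ (Fin d) → EuclideanSpace ℝ (Fin d))
    (hgrad : ∀ x, HasGradientAt F (gradF x) x)
    (L μ : ℝ) (hμ : 0 < μ) (hμL : μ ≤ L)
    (hLip : ∀ x y, ‖gradF x - gradF y‖ ≤ L * ‖x - y‖)
    (hsc : ∀ x y, F y ≥ F x + ⟪gradF x, y - x⟫ + μ / 2 * ‖y - x‖ ^ 2)
    (ξstar : EuclideanSpace ℝ (Fin d)) (hmin : ∀ y, F ξstar ≤ F y)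
    (ε : ℝ) (hε : 0 < ε)
    (η : ℝ) (hη : η = 2 / ((L + μ) * (1 + ε ^ 2)))
    (ξ υ : ℕ → Ω → EuclideanSpace ℝ (Fin d))
    (hmeasξ : ∀ k, Measurable (ξ k)) (hmeasυ : ∀ k, Measurable (υ k))
    (hsqξ : ∀ k, MemLp (ξ k) 2 P) (hsqυ : ∀ k, MemLp (υ k) 2 P)
    (ℱ : ℕ → MeasurableSpace Ω)
    (hℱ : ∀ k, ℱ k = ⨆ i ∈ Finset.range (k + 1), MeasurableSpace.comap (ξ i) inferInstance)
    (hupdate : ∀ k ω, ξ (k + 1) ω = ξ k ω - η • υ k ω)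
    (hunbiased : ∀ k, P[υ k | ℱ k] =ᵐ[P] fun ω => gradF (ξ k ω))
    (hnormtest : ∀ k,
      P[fun ω => ‖υ k ω - gradF (ξ k ω)‖ ^ 2 | ℱ k] ≤ᵐ[P]
        fun ω => ε ^ 2 * ‖gradF (ξ k ω)‖ ^ 2)
    (κ ρ : ℝ) (hκ : κ = L / μ)
    (hρ : ρ = (((κ - 1) / (κ + 1)) ^ 2 + ε ^ 2) / (1 + ε ^ 2)) :
    ∀ k : ℕ, ∫ ω, ‖ξ k ω - ξstar‖ ^ 2 ∂P ≤ ρ ^ k * ∫ ω, ‖ξ 0 ω - ξstar‖ ^ 2 ∂P := by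
  have hL : 0 < L := lt_of_lt_of_le hμ hμL
  have hμLpos : 0 < L + μ := by linarith
  have hgc : Continuous gradF := by
    have hlw : LipschitzWith (Real.toNNReal L) gradF := by
      apply LipschitzWith.of_dist_le_mul
      intro x y
      rw [dist_eq_norm, dist_eq_norm]
      simpa [Real.coe_toNNReal L hL.le] using hLip x y
    exact hlw.continuous
  have hsc' : ∀ x y, F x + ⟪gradF x, y - x⟫ + μ / 2 * ‖y - x‖ ^ 2 ≤ F y := fun x y => hsc x y
  have hg0 : gradF ξstar = 0 := sgd_aux_gradzero hgrad hL hLip hmin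
  have hcoer : ∀ x : EuclideanSpace ℝ (Fin d),
      μ * L / (μ + L) * ‖x - ξstar‖ ^ 2 + 1 / (μ + L) * ‖gradF x‖ ^ 2
        ≤ ⟪gradF x, x - ξstar⟫ := by
    intro x
    have h := sgd_aux_coercive hgrad hμ hμL hLip hsc' x ξstar
    rwa [hg0, sub_zero] at h
  have hρ0 : 0 ≤ ρ := by
    rw [hρ]
    positivity
  have hη0 : 0 < η := by
    rw [hη]
    exact div_pos two_pos (mul_pos hμLpos (by positivity))
  have key : ∀ k, ∫ ω, ‖ξ (k + 1) ω - ξstar‖ ^ 2 ∂P ≤ ρ * ∫ ω, ‖ξ k ω - ξstar‖ ^ 2 ∂P := by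
    intro k
    have hm : ℱ k ≤ (inferInstance : MeasurableSpace Ω) := by
      rw [hℱ k]
      refine iSup_le fun i => iSup_le fun _ => ?_
      exact measurable_iff_comap_le.mp (hmeasξ i)
    have hξkm : Measurable[ℱ k] (ξ k) := by
      rw [measurable_iff_comap_le, hℱ k]
      exact le_iSup₂ (f := fun i (_ : i ∈ Finset.range (k + 1)) =>
        MeasurableSpace.comap (ξ i) inferInstance) k (Finset.self_mem_range_succ k)
    have hδm : StronglyMeasurable[ℱ k] (fun ω => ξ k ω - ξstar) :=
      (hξkm.sub measurable_const).stronglyMeasurable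
    have hum : StronglyMeasurable[ℱ k] (fun ω => gradF (ξ k ω)) :=
      (hgc.measurable.comp hξkm).stronglyMeasurable
    have hδ2 : MemLp (fun ω => ξ k ω - ξstar) 2 P := (hsqξ k).sub (memLp_const ξstar)
    have hu2 : MemLp (fun ω => gradF (ξ k ω)) 2 P := by
      refine MemLp.of_le (hδ2.const_smul L)
        (hgc.comp_aestronglyMeasurable (hmeasξ k).aestronglyMeasurable)
        (Filter.Eventually.of_forall fun ω => ?_)
      have e : ‖gradF (ξ k ω)‖ = ‖gradF (ξ k ω) - gradF ξstar‖ := by rw [hg0, sub_zero]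
      rw [e, Pi.smul_apply, norm_smul, Real.norm_eq_abs, abs_of_pos hL]
      exact hLip _ _
    have hY2 : MemLp (fun ω => υ k ω - gradF (ξ k ω)) 2 P := (hsqυ k).sub hu2
    have huint : Integrable (fun ω => gradF (ξ k ω)) P := hu2.integrable one_le_two
    have hυint : Integrable (υ k) P := (hsqυ k).integrable one_le_two
    have hYc : P[fun ω => υ k ω - gradF (ξ k ω)|ℱ k] =ᵐ[P] 0 := by
      have h0 : P[fun ω => υ k ω - gradF (ξ k ω)|ℱ k]
          =ᵐ[P] P[υ k - fun ω => gradF (ξ k ω)|ℱ k] := by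
        refine condExp_congr_ae (Filter.Eventually.of_forall fun ω => rfl)
      have h1 : P[υ k - fun ω => gradF (ξ k ω)|ℱ k]
          =ᵐ[P] P[υ k|ℱ k] - P[fun ω => gradF (ξ k ω)|ℱ k] := condExp_sub hυint huint _
      have h2 : P[fun ω => gradF (ξ k ω)|ℱ k] = fun ω => gradF (ξ k ω) :=
        condExp_of_stronglyMeasurable hm hum huint
      filter_upwards [h0, h1, hunbiased k] with ω hω0 hω1 hω2
      rw [Pi.zero_apply, hω0, hω1, Pi.sub_apply, hω2, h2, sub_self]
    have iδδ : Integrable (fun ω => ‖ξ k ω - ξstar‖ ^ 2) P := sgd_aux_sq_integrable hδ2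
    have iuu : Integrable (fun ω => ‖gradF (ξ k ω)‖ ^ 2) P := sgd_aux_sq_integrable hu2
    have iYY : Integrable (fun ω => ‖υ k ω - gradF (ξ k ω)‖ ^ 2) P := sgd_aux_sq_integrable hY2
    have iυυ : Integrable (fun ω => ‖υ k ω‖ ^ 2) P := sgd_aux_sq_integrable (hsqυ k)
    have iδu : Integrable (fun ω => ⟪ξ k ω - ξstar, gradF (ξ k ω)⟫) P :=
      sgd_aux_integrable_inner hδ2 hu2
    have iδY : Integrable (fun ω => ⟪ξ k ω - ξstar, υ k ω - gradF (ξ k ω)⟫) P :=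
      sgd_aux_integrable_inner hδ2 hY2
    have iuY : Integrable (fun ω => ⟪gradF (ξ k ω), υ k ω - gradF (ξ k ω)⟫) P :=
      sgd_aux_integrable_inner hu2 hY2
    have iδυ : Integrable (fun ω => ⟪ξ k ω - ξstar, υ k ω⟫) P :=
      sgd_aux_integrable_inner hδ2 (hsqυ k)
    have c1 : ∫ ω, ⟪ξ k ω - ξstar, υ k ω - gradF (ξ k ω)⟫ ∂P = 0 :=
      sgd_aux_cross hm hδm hδ2 hY2 hYc
    have c2 : ∫ ω, ⟪gradF (ξ k ω), υ k ω - gradF (ξ k ω)⟫ ∂P = 0 :=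
      sgd_aux_cross hm hum hu2 hY2 hYc
    have hD : ∫ ω, ‖υ k ω - gradF (ξ k ω)‖ ^ 2 ∂P ≤ ε ^ 2 * ∫ ω, ‖gradF (ξ k ω)‖ ^ 2 ∂P := by
      calc ∫ ω, ‖υ k ω - gradF (ξ k ω)‖ ^ 2 ∂P
          = ∫ ω, (P[fun ω => ‖υ k ω - gradF (ξ k ω)‖ ^ 2|ℱ k]) ω ∂P :=
            (integral_condExp hm).symm
        _ ≤ ∫ ω, ε ^ 2 * ‖gradF (ξ k ω)‖ ^ 2 ∂P :=
            integral_mono_ae integrable_condExp (iuu.const_mul (ε ^ 2)) (hnormtest k)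
        _ = ε ^ 2 * ∫ ω, ‖gradF (ξ k ω)‖ ^ 2 ∂P := integral_const_mul _ _
    have hC : μ * L / (μ + L) * ∫ ω, ‖ξ k ω - ξstar‖ ^ 2 ∂P
        + 1 / (μ + L) * ∫ ω, ‖gradF (ξ k ω)‖ ^ 2 ∂P
        ≤ ∫ ω, ⟪ξ k ω - ξstar, gradF (ξ k ω)⟫ ∂P := by
      have hpt : ∀ ω, μ * L / (μ + L) * ‖ξ k ω - ξstar‖ ^ 2
          + 1 / (μ + L) * ‖gradF (ξ k ω)‖ ^ 2 ≤ ⟪ξ k ω - ξstar, gradF (ξ k ω)⟫ := by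
        intro ω
        have h := hcoer (ξ k ω)
        rwa [real_inner_comm] at h
      calc μ * L / (μ + L) * ∫ ω, ‖ξ k ω - ξstar‖ ^ 2 ∂P
            + 1 / (μ + L) * ∫ ω, ‖gradF (ξ k ω)‖ ^ 2 ∂P
          = ∫ ω, (μ * L / (μ + L) * ‖ξ k ω - ξstar‖ ^ 2
              + 1 / (μ + L) * ‖gradF (ξ k ω)‖ ^ 2) ∂P := by
            have e1 : ∫ ω, (μ * L / (μ + L) * ‖ξ k ω - ξstar‖ ^ 2
                + 1 / (μ + L) * ‖gradF (ξ k ω)‖ ^ 2) ∂P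
                = (∫ ω, μ * L / (μ + L) * ‖ξ k ω - ξstar‖ ^ 2 ∂P)
                  + ∫ ω, 1 / (μ + L) * ‖gradF (ξ k ω)‖ ^ 2 ∂P :=
              integral_add (iδδ.const_mul _) (iuu.const_mul _)
            have e2 : ∫ ω, μ * L / (μ + L) * ‖ξ k ω - ξstar‖ ^ 2 ∂P
                = μ * L / (μ + L) * ∫ ω, ‖ξ k ω - ξstar‖ ^ 2 ∂P := integral_const_mul _ _
            have e3 : ∫ ω, 1 / (μ + L) * ‖gradF (ξ k ω)‖ ^ 2 ∂P
                = 1 / (μ + L) * ∫ ω, ‖gradF (ξ k ω)‖ ^ 2 ∂P := integral_const_mul _ _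
            rw [e1, e2, e3]
        _ ≤ ∫ ω, ⟪ξ k ω - ξstar, gradF (ξ k ω)⟫ ∂P :=
            integral_mono ((iδδ.const_mul _).add (iuu.const_mul _)) iδu hpt
    have hstep : ∫ ω, ‖ξ (k + 1) ω - ξstar‖ ^ 2 ∂P
        = ∫ ω, ‖ξ k ω - ξstar‖ ^ 2 ∂P - 2 * η * ∫ ω, ⟪ξ k ω - ξstar, υ k ω⟫ ∂P
          + η ^ 2 * ∫ ω, ‖υ k ω‖ ^ 2 ∂P := by
      have hpt : ∀ ω, ‖ξ (k + 1) ω - ξstar‖ ^ 2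
          = ‖ξ k ω - ξstar‖ ^ 2 - 2 * η * ⟪ξ k ω - ξstar, υ k ω⟫ + η ^ 2 * ‖υ k ω‖ ^ 2 := by
        intro ω
        have e : ξ (k + 1) ω - ξstar = (ξ k ω - ξstar) - η • υ k ω := by
          rw [hupdate k ω]
          abel
        rw [e, norm_sub_sq_real, real_inner_smul_right, norm_smul, Real.norm_eq_abs, mul_pow,
          sq_abs]
        ring
      calc ∫ ω, ‖ξ (k + 1) ω - ξstar‖ ^ 2 ∂P
          = ∫ ω, (‖ξ k ω - ξstar‖ ^ 2 - 2 * η * ⟪ξ k ω - ξstar, υ k ω⟫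
              + η ^ 2 * ‖υ k ω‖ ^ 2) ∂P := integral_congr_ae (Filter.Eventually.of_forall hpt)
        _ = ∫ ω, ‖ξ k ω - ξstar‖ ^ 2 ∂P - 2 * η * ∫ ω, ⟪ξ k ω - ξstar, υ k ω⟫ ∂P
              + η ^ 2 * ∫ ω, ‖υ k ω‖ ^ 2 ∂P := by
            have i2 : Integrable
                (fun ω => ‖ξ k ω - ξstar‖ ^ 2 - 2 * η * ⟪ξ k ω - ξstar, υ k ω⟫) P :=
              iδδ.sub (iδυ.const_mul _)
            have e1 : ∫ ω, (‖ξ k ω - ξstar‖ ^ 2 - 2 * η * ⟪ξ k ω - ξstar, υ k ω⟫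
                + η ^ 2 * ‖υ k ω‖ ^ 2) ∂P
                = (∫ ω, (‖ξ k ω - ξstar‖ ^ 2 - 2 * η * ⟪ξ k ω - ξstar, υ k ω⟫) ∂P)
                  + ∫ ω, η ^ 2 * ‖υ k ω‖ ^ 2 ∂P := integral_add i2 (iυυ.const_mul _)
            have e2 : ∫ ω, (‖ξ k ω - ξstar‖ ^ 2 - 2 * η * ⟪ξ k ω - ξstar, υ k ω⟫) ∂P
                = (∫ ω, ‖ξ k ω - ξstar‖ ^ 2 ∂P)
                  - ∫ ω, 2 * η * ⟪ξ k ω - ξstar, υ k ω⟫ ∂P :=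
              integral_sub iδδ (iδυ.const_mul _)
            have e3 : ∫ ω, 2 * η * ⟪ξ k ω - ξstar, υ k ω⟫ ∂P
                = 2 * η * ∫ ω, ⟪ξ k ω - ξstar, υ k ω⟫ ∂P := integral_const_mul _ _
            have e4 : ∫ ω, η ^ 2 * ‖υ k ω‖ ^ 2 ∂P
                = η ^ 2 * ∫ ω, ‖υ k ω‖ ^ 2 ∂P := integral_const_mul _ _
            rw [e1, e2, e3, e4]
    have hexp2 : ∫ ω, ‖υ k ω‖ ^ 2 ∂P = ∫ ω, ‖gradF (ξ k ω)‖ ^ 2 ∂P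
        + ∫ ω, ‖υ k ω - gradF (ξ k ω)‖ ^ 2 ∂P := by
      have hpt : ∀ ω, ‖υ k ω‖ ^ 2 = ‖gradF (ξ k ω)‖ ^ 2
          + 2 * ⟪gradF (ξ k ω), υ k ω - gradF (ξ k ω)⟫ + ‖υ k ω - gradF (ξ k ω)‖ ^ 2 := by
        intro ω
        have e : υ k ω = gradF (ξ k ω) + (υ k ω - gradF (ξ k ω)) := by abel
        calc ‖υ k ω‖ ^ 2 = ‖gradF (ξ k ω) + (υ k ω - gradF (ξ k ω))‖ ^ 2 := by rw [← e]
          _ = _ := norm_add_sq_real _ _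
      calc ∫ ω, ‖υ k ω‖ ^ 2 ∂P
          = ∫ ω, (‖gradF (ξ k ω)‖ ^ 2 + 2 * ⟪gradF (ξ k ω), υ k ω - gradF (ξ k ω)⟫
              + ‖υ k ω - gradF (ξ k ω)‖ ^ 2) ∂P :=
            integral_congr_ae (Filter.Eventually.of_forall hpt)
        _ = ∫ ω, ‖gradF (ξ k ω)‖ ^ 2 ∂P
              + 2 * ∫ ω, ⟪gradF (ξ k ω), υ k ω - gradF (ξ k ω)⟫ ∂P
              + ∫ ω, ‖υ k ω - gradF (ξ k ω)‖ ^ 2 ∂P := by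
            have i2 : Integrable (fun ω => ‖gradF (ξ k ω)‖ ^ 2
                + 2 * ⟪gradF (ξ k ω), υ k ω - gradF (ξ k ω)⟫) P :=
              iuu.add (iuY.const_mul _)
            have e1 : ∫ ω, (‖gradF (ξ k ω)‖ ^ 2
                + 2 * ⟪gradF (ξ k ω), υ k ω - gradF (ξ k ω)⟫
                + ‖υ k ω - gradF (ξ k ω)‖ ^ 2) ∂P
                = (∫ ω, (‖gradF (ξ k ω)‖ ^ 2
                    + 2 * ⟪gradF (ξ k ω), υ k ω - gradF (ξ k ω)⟫) ∂P)
                  + ∫ ω, ‖υ k ω - gradF (ξ k ω)‖ ^ 2 ∂P := integral_add i2 iYY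
            have e2 : ∫ ω, (‖gradF (ξ k ω)‖ ^ 2
                + 2 * ⟪gradF (ξ k ω), υ k ω - gradF (ξ k ω)⟫) ∂P
                = (∫ ω, ‖gradF (ξ k ω)‖ ^ 2 ∂P)
                  + ∫ ω, 2 * ⟪gradF (ξ k ω), υ k ω - gradF (ξ k ω)⟫ ∂P :=
              integral_add iuu (iuY.const_mul _)
            have e3 : ∫ ω, 2 * ⟪gradF (ξ k ω), υ k ω - gradF (ξ k ω)⟫ ∂P
                = 2 * ∫ ω, ⟪gradF (ξ k ω), υ k ω - gradF (ξ k ω)⟫ ∂P := integral_const_mul _ _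
            rw [e1, e2, e3]
        _ = _ := by rw [c2]; ring
    have hexp3 : ∫ ω, ⟪ξ k ω - ξstar, υ k ω⟫ ∂P
        = ∫ ω, ⟪ξ k ω - ξstar, gradF (ξ k ω)⟫ ∂P := by
      have hpt : ∀ ω, ⟪ξ k ω - ξstar, υ k ω⟫
          = ⟪ξ k ω - ξstar, gradF (ξ k ω)⟫ + ⟪ξ k ω - ξstar, υ k ω - gradF (ξ k ω)⟫ := by
        intro ω
        rw [← inner_add_right]
        congr 1
        abel
      calc ∫ ω, ⟪ξ k ω - ξstar, υ k ω⟫ ∂P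
          = ∫ ω, (⟪ξ k ω - ξstar, gradF (ξ k ω)⟫
              + ⟪ξ k ω - ξstar, υ k ω - gradF (ξ k ω)⟫) ∂P :=
            integral_congr_ae (Filter.Eventually.of_forall hpt)
        _ = ∫ ω, ⟪ξ k ω - ξstar, gradF (ξ k ω)⟫ ∂P
              + ∫ ω, ⟪ξ k ω - ξstar, υ k ω - gradF (ξ k ω)⟫ ∂P := integral_add iδu iδY
        _ = _ := by rw [c1, add_zero]
    rw [hstep, hexp3, hexp2]
    have hB0 : 0 ≤ ∫ ω, ‖gradF (ξ k ω)‖ ^ 2 ∂P := integral_nonneg fun ω => sq_nonneg _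
    exact sgd_aux_algebra hμ hμL hε hη hκ hρ hB0 hD hC
  intro k
  induction k with
  | zero => simp
  | succ k ih =>
      calc ∫ ω, ‖ξ (k + 1) ω - ξstar‖ ^ 2 ∂P ≤ ρ * ∫ ω, ‖ξ k ω - ξstar‖ ^ 2 ∂P := key k
        _ ≤ ρ * (ρ ^ k * ∫ ω, ‖ξ 0 ω - ξstar‖ ^ 2 ∂P) := mul_le_mul_of_nonneg_left ih hρ0
        _ = ρ ^ (k + 1) * ∫ ω, ‖ξ 0 ω - ξstar‖ ^ 2 ∂P := by ring
end
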